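/- Let Z be the (n! × n) matrix with (t,i) entry equal to log p(y^{(t)}_i | y^{(t)}_{1:i−1}) where the t-th row corresponds to the t-th permutation of y_{1:n}, for an exchangeable positive joint probability p. Then for each column index i, the column average (1/n!) Σ_t (Z)_{ti} equals S_CV(y_{1:n}; n−i+1) = (1/C(n,i−1)) Σ over (i−1)-element training sets A of (1/(n−i+1)) Σ_{j∉A} log( p(y_{A∪{j}})/p(y_A) ). -/

import Mathlib

open Finset

/-- Key step of Proposition 2: for an exchangeable positive joint probability (represented
by its marginal `m` on unordered subsets of indices), averaging the `i`-th prequential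
log conditional over all `n!` orderings equals the leave-`(n−i)`-out cross-validation
score over all training sets of size `i` (here `i` is zero-based, matching the paper's
`i−1` training points). -/
theorem stmt8 (n : ℕ) (m : Finset (Fin n) → ℝ) (hpos : ∀ S, 0 < m S) (i : Fin n) :
    ((n.factorial : ℝ))⁻¹ *
      ∑ σ : Equiv.Perm (Fin n),
        Real.log (m (insert (σ i) ((Finset.univ.filter (· < i)).image σ)) /
          m ((Finset.univ.filter (· < i)).image σ)) =
    ((n.choose i.val : ℝ))⁻¹ *
      ∑ A ∈ (Finset.univ : Finset (Fin n)).powersetCard i.val,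
        ((n - i.val : ℕ) : ℝ)⁻¹ *
          ∑ j ∈ Aᶜ, Real.log (m (insert j A) / m A) := by
  classical
  set T : Finset (Fin n) := Finset.univ.filter (· < i) with hTdef
  have hTcard : T.card = i.val := by
    have : T = Finset.Iio i := by ext x; simp [hTdef]
    rw [this, Fin.card_Iio]
  have hiT : i ∉ T := by simp [hTdef]
  set S : Finset ((_ : Finset (Fin n)) × Fin n) :=
    ((Finset.univ : Finset (Fin n)).powersetCard i.val).sigma (fun A => Aᶜ) with hSdef
  set g : Equiv.Perm (Fin n) → (_ : Finset (Fin n)) × Fin n :=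
    fun σ => ⟨T.image σ, σ i⟩ with hgdef
  set G : (_ : Finset (Fin n)) × Fin n → ℝ :=
    fun p => Real.log (m (insert p.2 p.1) / m p.1) with hGdef
  have hmaps : ∀ σ : Equiv.Perm (Fin n), σ ∈ (Finset.univ : Finset (Equiv.Perm (Fin n))) →
      g σ ∈ S := by
    intro σ _
    simp only [hSdef, hgdef, Finset.mem_sigma, Finset.mem_powersetCard, Finset.mem_compl]
    refine ⟨⟨Finset.subset_univ _, ?_⟩, ?_⟩
    · rw [Finset.card_image_of_injective _ σ.injective, hTcard]
    · intro h
      obtain ⟨a, ha, haa⟩ := Finset.mem_image.mp h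
      exact hiT (σ.injective haa ▸ ha)
  -- all fibers of g have the same cardinality
  have hfib : ∀ p ∈ S, ∀ q ∈ S,
      (Finset.univ.filter fun σ : Equiv.Perm (Fin n) => g σ = p).card =
      (Finset.univ.filter fun σ : Equiv.Perm (Fin n) => g σ = q).card := by
    rintro ⟨A, j⟩ hp ⟨A', j'⟩ hq
    simp only [hSdef, Finset.mem_sigma, Finset.mem_powersetCard, Finset.mem_compl] at hp hq
    obtain ⟨⟨-, hA⟩, hj⟩ := hp
    obtain ⟨⟨-, hA'⟩, hj'⟩ := hq
    have hcard : A.card = A'.card := by rw [hA, hA']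
    let e : {x // x ∈ A} ≃ {x // x ∈ A'} := Finset.equivOfCardEq hcard
    let τ0 : Equiv.Perm (Fin n) := e.extendSubtype
    have hτ0j : τ0 j ∉ A' := e.extendSubtype_not_mem j hj
    let τ : Equiv.Perm (Fin n) := Equiv.swap (τ0 j) j' * τ0
    have hτj : τ j = j' := by
      simp [τ, Equiv.Perm.mul_apply]
    have hτA : A.image τ = A' := by
      have hsub : A.image τ ⊆ A' := by
        intro x hx
        obtain ⟨a, ha, rfl⟩ := Finset.mem_image.mp hx
        have h1 : τ0 a ∈ A' := e.extendSubtype_mem a ha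
        have : τ a = τ0 a := by
          simp only [τ, Equiv.Perm.mul_apply]
          exact Equiv.swap_apply_of_ne_of_ne (fun h => hτ0j (h ▸ h1)) (fun h => hj' (h ▸ h1))
        rw [this]; exact h1
      refine Finset.eq_of_subset_of_card_le hsub ?_
      rw [Finset.card_image_of_injective _ τ.injective, hcard]
    have hτA' : A'.image ⇑τ⁻¹ = A := by
      rw [← hτA, Finset.image_image]
      have : ⇑τ⁻¹ ∘ ⇑τ = id := by
        funext x; simp
      rw [this, Finset.image_id]
    refine Finset.card_bij' (fun σ _ => τ * σ) (fun σ _ => τ⁻¹ * σ) ?_ ?_ ?_ ?_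
    · intro σ hσ
      simp only [Finset.mem_filter, Finset.mem_univ, true_and, hgdef] at hσ ⊢
      have h1 : T.image ⇑σ = A := congrArg Sigma.fst hσ
      have h2 : σ i = j := congrArg Sigma.snd hσ
      have : T.image ⇑(τ * σ) = A' := by
        rw [Equiv.Perm.coe_mul, ← Finset.image_image, h1, hτA]
      exact Sigma.ext this (heq_of_eq (by rw [Equiv.Perm.mul_apply, h2, hτj]))
    · intro σ hσ
      simp only [Finset.mem_filter, Finset.mem_univ, true_and, hgdef] at hσ ⊢
      have h1 : T.image ⇑σ = A' := congrArg Sigma.fst hσ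
      have h2 : σ i = j' := congrArg Sigma.snd hσ
      have himg : T.image ⇑(τ⁻¹ * σ) = A := by
        rw [Equiv.Perm.coe_mul, ← Finset.image_image, h1, hτA']
      refine Sigma.ext himg (heq_of_eq ?_)
      rw [Equiv.Perm.mul_apply, h2, ← hτj]
      simp
    · intro σ _; group
    · intro σ _; group
  -- rewrite LHS as sum over fibers
  have hLHS : ∑ σ : Equiv.Perm (Fin n),
      Real.log (m (insert (σ i) (T.image σ)) / m (T.image σ)) =
      ∑ p ∈ S, ((Finset.univ.filter fun σ : Equiv.Perm (Fin n) => g σ = p).card : ℝ) * G p := by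
    rw [← Finset.sum_fiberwise_of_maps_to hmaps
      (fun σ : Equiv.Perm (Fin n) => Real.log (m (insert (σ i) (T.image σ)) / m (T.image σ)))]
    refine Finset.sum_congr rfl fun p hp => ?_
    have hconst : ∀ σ ∈ Finset.univ.filter (fun σ : Equiv.Perm (Fin n) => g σ = p),
        Real.log (m (insert (σ i) (T.image σ)) / m (T.image σ)) = G p := by
      intro σ hσ
      simp only [Finset.mem_filter, Finset.mem_univ, true_and, hgdef] at hσ
      have h1 : T.image ⇑σ = p.1 := congrArg Sigma.fst hσ
      have h2 : σ i = p.2 := congrArg Sigma.snd hσ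
      rw [hGdef, h1, h2]
    rw [Finset.sum_congr rfl hconst, Finset.sum_const, nsmul_eq_mul]
  -- the common fiber cardinality
  have hSne : S.Nonempty := ⟨g 1, hmaps 1 (Finset.mem_univ _)⟩
  obtain ⟨p0, hp0⟩ := hSne
  set c : ℕ := (Finset.univ.filter fun σ : Equiv.Perm (Fin n) => g σ = p0).card with hcdef
  have hfibc : ∀ p ∈ S, (Finset.univ.filter fun σ : Equiv.Perm (Fin n) => g σ = p).card = c :=
    fun p hp => hfib p hp p0 hp0
  have htotal : S.card * c = n.factorial := by
    have := Finset.sum_fiberwise_of_maps_to hmaps (fun _ : Equiv.Perm (Fin n) => (1 : ℕ))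
    simp only [Finset.sum_const, smul_eq_mul, mul_one] at this
    rw [Finset.sum_congr rfl hfibc] at this
    simpa [Finset.card_univ, Fintype.card_perm] using this
  have hScard : S.card = n.choose i.val * (n - i.val) := by
    rw [hSdef, Finset.card_sigma]
    rw [Finset.sum_congr rfl (fun A hA => ?_), Finset.sum_const, smul_eq_mul]
    · rw [Finset.card_powersetCard, Finset.card_univ, Fintype.card_fin]
    · rw [Finset.card_compl, Fintype.card_fin,
        (Finset.mem_powersetCard.mp hA).2]
  have hni : 0 < n - i.val := Nat.sub_pos_of_lt i.isLt
  have hchoose : 0 < n.choose i.val := Nat.choose_pos (le_of_lt i.isLt)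
  have hSpos : 0 < S.card := by rw [hScard]; positivity
  have hcpos : 0 < c := by
    rcases Nat.eq_zero_or_pos c with h | h
    · exfalso
      have := htotal
      rw [h, mul_zero] at this
      exact (Nat.factorial_pos n).ne' this.symm
    · exact h
  -- put everything together
  rw [hLHS, Finset.sum_congr rfl (fun p hp => by rw [hfibc p hp]), ← Finset.mul_sum]
  have hRHS : ∑ A ∈ (Finset.univ : Finset (Fin n)).powersetCard i.val,
      ((n - i.val : ℕ) : ℝ)⁻¹ * ∑ j ∈ Aᶜ, Real.log (m (insert j A) / m A)
      = ((n - i.val : ℕ) : ℝ)⁻¹ * ∑ p ∈ S, G p := by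
    rw [Finset.mul_sum, hSdef, Finset.sum_sigma]
    exact Finset.sum_congr rfl fun A hA => Finset.mul_sum _ _ _
  rw [hRHS]
  rw [← mul_assoc, ← mul_assoc]
  congr 1
  have hfac : ((n.choose i.val : ℝ) * ((n - i.val : ℕ) : ℝ)) * (c : ℝ) = (n.factorial : ℝ) := by
    rw [← Nat.cast_mul, ← Nat.cast_mul, ← hScard, htotal]
  have hc0 : (c : ℝ) ≠ 0 := Nat.cast_ne_zero.mpr hcpos.ne'
  have hch0 : ((n.choose i.val : ℕ) : ℝ) ≠ 0 := Nat.cast_ne_zero.mpr hchoose.ne'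
  have hni0 : (((n - i.val : ℕ)) : ℝ) ≠ 0 := Nat.cast_ne_zero.mpr hni.ne'
  rw [← hfac, mul_inv, mul_assoc, inv_mul_cancel₀ hc0, mul_one, mul_inv]
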